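/- For a > 0, ω > 0 and 0 < q < 1, the principal argument of the phase-shaper frequency response is strictly negative and bounded below: −qπ/2 < arg H(ω) < 0. In particular, inserting the phase shaper into a loop always decreases the phase at any frequency by an amount less than qπ/2. -/

import Mathlib

open Real Complex

theorem shaper_arg_bounds (a ω q : ℝ) (ha : 0 < a) (hω : 0 < ω)
    (hq : 0 < q) (hq1 : q < 1) :
    -(q * Real.pi / 2) <
      Complex.arg
        (((1 : ℂ) + ((a * ω ^ q : ℝ) : ℂ) * Complex.exp (Complex.I * (q * Real.pi / 2))) /
          (((ω ^ q : ℝ) : ℂ) * Complex.exp (Complex.I * (q * Real.pi / 2)))) ∧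
    Complex.arg
        (((1 : ℂ) + ((a * ω ^ q : ℝ) : ℂ) * Complex.exp (Complex.I * (q * Real.pi / 2))) /
          (((ω ^ q : ℝ) : ℂ) * Complex.exp (Complex.I * (q * Real.pi / 2)))) < 0 := by
  have hπ := Real.pi_pos
  set θ : ℝ := q * Real.pi / 2 with hθdef
  have hθ0 : 0 < θ := by positivity
  have hθlt : θ < Real.pi / 2 := by
    rw [hθdef]
    nlinarith
  have hc : 0 < Real.cos θ :=
    Real.cos_pos_of_mem_Ioo ⟨by linarith, hθlt⟩
  have hs : 0 < Real.sin θ :=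
    Real.sin_pos_of_pos_of_lt_pi hθ0 (by linarith)
  have hw : (0 : ℝ) < ω ^ q := Real.rpow_pos_of_pos hω q
  have hr : (0 : ℝ) < a * ω ^ q := mul_pos ha hw
  set r : ℝ := a * ω ^ q with hrdef
  -- the exponential
  have hexp : Complex.exp (Complex.I * ((q : ℂ) * (Real.pi : ℂ) / 2)) =
      (Real.cos θ : ℂ) + (Real.sin θ : ℂ) * Complex.I := by
    have : Complex.I * ((q : ℂ) * (Real.pi : ℂ) / 2) = ((θ : ℝ) : ℂ) * Complex.I := by
      push_cast [hθdef]; ring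
    rw [this, Complex.exp_mul_I, Complex.ofReal_cos, Complex.ofReal_sin]
  have hpyth : Real.cos θ ^ 2 + Real.sin θ ^ 2 = 1 := by
    rw [add_comm]; exact Real.sin_sq_add_cos_sq θ
  -- rewrite H
  set z : ℂ := ((Real.cos θ + r : ℝ) : ℂ) + ((-Real.sin θ : ℝ) : ℂ) * Complex.I with hzdef
  have hne : ((Real.cos θ : ℂ) + (Real.sin θ : ℂ) * Complex.I) ≠ 0 := by
    intro h
    have := congrArg Complex.re h
    simp [Complex.add_re, Complex.mul_re] at this
    exact absurd this (ne_of_gt hc)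
  have hwne : ((ω ^ q : ℝ) : ℂ) ≠ 0 := by
    exact_mod_cast ne_of_gt hw
  have hH : (((1 : ℂ) + ((a * ω ^ q : ℝ) : ℂ) * Complex.exp (Complex.I * (q * Real.pi / 2))) /
        (((ω ^ q : ℝ) : ℂ) * Complex.exp (Complex.I * (q * Real.pi / 2)))) =
      (((ω ^ q)⁻¹ : ℝ) : ℂ) * z := by
    rw [hexp, hzdef, div_eq_iff (mul_ne_zero hwne hne)]
    push_cast
    have h1 : (Complex.cos θ)^2 + (Complex.sin θ)^2 = 1 := by
      have := congrArg (fun x : ℝ => (x : ℂ)) hpyth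
      push_cast at this
      exact this
    field_simp [hrdef]
    have hrC : (r : ℂ) = (a : ℂ) * ((ω ^ q : ℝ) : ℂ) := by rw [hrdef, Complex.ofReal_mul]
    linear_combination (-1 : ℂ) * h1 + (Complex.sin (θ:ℂ)^2) * Complex.I_sq - (Complex.cos (θ:ℂ) + Complex.sin (θ:ℂ) * Complex.I) * hrC
  have hinv : (0:ℝ) < (ω ^ q)⁻¹ := inv_pos.2 hw
  rw [hH, Complex.arg_real_mul z hinv]
  have hre : z.re = Real.cos θ + r := by simp [hzdef, ← Complex.ofReal_cos]
  have him : z.im = -Real.sin θ := by simp [hzdef, ← Complex.ofReal_sin]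
  have hrepos : 0 < z.re := by rw [hre]; linarith
  have himneg : z.im < 0 := by rw [him]; linarith
  have hupper : Complex.arg z < 0 := Complex.arg_neg_iff.2 himneg
  have hlow : -(Real.pi/2) < Complex.arg z :=
    Complex.neg_pi_div_two_lt_arg_iff.2 (Or.inl hrepos)
  refine ⟨?_, hupper⟩
  have htan : Real.tan (Complex.arg z) = -Real.sin θ / (Real.cos θ + r) := by
    rw [Complex.tan_arg, him, hre]
  have harg_eq : Complex.arg z = Real.arctan (-Real.sin θ / (Real.cos θ + r)) := by
    rw [← htan, Real.arctan_tan hlow (by linarith)]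
  have hdiv : Real.sin θ / (Real.cos θ + r) < Real.sin θ / Real.cos θ :=
    div_lt_div_of_pos_left hs hc (by linarith)
  have htanθ : Real.tan θ = Real.sin θ / Real.cos θ := Real.tan_eq_sin_div_cos θ
  have hkey : -θ < Real.arctan (-Real.sin θ / (Real.cos θ + r)) := by
    have h2 : Real.arctan (-(Real.sin θ / Real.cos θ)) <
        Real.arctan (-(Real.sin θ / (Real.cos θ + r))) :=
      Real.arctan_strictMono (by linarith)
    have h3 : Real.arctan (-(Real.sin θ / Real.cos θ)) = -θ := by
      rw [Real.arctan_neg, ← htanθ, Real.arctan_tan (by linarith) hθlt]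
    rw [neg_div]
    linarith
  rw [harg_eq, hθdef] at *
  exact hkey
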